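/- arXiv:2102.08898 — 3 statements merged into one kernel-verified Lean document; each statement's English description precedes it below -/
import Mathlib

section
/- Let V_1, ..., V_{n+1} be exchangeable real-valued random variables. Then for any β ∈ (0,1), P(V_{n+1} ≤ Quantile(β; V_{1:n} ∪ {∞})) ≥ β, where Quantile(β; F) := inf{v : F(v) ≥ β} and the quantile is taken with respect to the empirical distribution of the n values V_1,...,V_n together with one additional point at +∞. -/
open MeasureTheory Set
open scoped ENNReal Classical

/-- Exchangeability: the joint law of the vector is invariant under permutations. -/
def Exchangeable {Ω : Type*} [MeasurableSpace Ω] {E : Type*} [MeasurableSpace E]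
    (μ : Measure Ω) {n : ℕ} (V : Fin n → Ω → E) : Prop :=
  ∀ σ : Equiv.Perm (Fin n),
    Measure.map (fun ω i => V (σ i) ω) μ = Measure.map (fun ω i => V i ω) μ

/-- `Quantile(β; v₁,…,vₙ ∪ {∞})`: the β-quantile of the empirical distribution putting mass
`1/(n+1)` on each of the `n` real points and on one additional point at `+∞`. -/
noncomputable def inflatedQuantile (n : ℕ) (β : ℝ) (v : Fin n → ℝ) : EReal :=
  sInf {t : EReal |
    β ≤ ((({i : Fin n | (v i : EReal) ≤ t}).ncard : ℝ) + (if t = ⊤ then 1 else 0)) / ((n : ℝ) + 1)}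

lemma ncard_le_filter {n : ℕ} (v : Fin n → ℝ) (t : EReal) :
    ({i : Fin n | (v i : EReal) ≤ t}).ncard
      = (Finset.univ.filter (fun i => (v i : EReal) ≤ t)).card := by
  simp [Set.ncard_eq_toFinset_card', Set.toFinset_setOf]

lemma mem_quantile_set_iff {n : ℕ} {β : ℝ} (v : Fin n → ℝ) (t : EReal) :
    (β ≤ ((({i : Fin n | (v i : EReal) ≤ t}).ncard : ℝ) + (if t = ⊤ then 1 else 0)) / ((n : ℝ) + 1))
      ↔ ⌈β * ((n : ℝ) + 1)⌉₊ ≤ (Finset.univ.filter (fun i => (v i : EReal) ≤ t)).card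
          + (if t = ⊤ then 1 else 0) := by
  have hn : (0:ℝ) < (n:ℝ) + 1 := by positivity
  rw [le_div_iff₀ hn, ncard_le_filter, Nat.ceil_le]
  split <;> push_cast <;> exact Iff.rfl

lemma le_inflatedQuantile_iff {n : ℕ} {β : ℝ} (hβ0 : 0 < β) (v : Fin n → ℝ) (w : ℝ) :
    (w : EReal) ≤ inflatedQuantile n β v ↔
      (Finset.univ.filter (fun i => v i < w)).card < ⌈β * ((n : ℝ) + 1)⌉₊ := by
  have hk1 : 0 < ⌈β * ((n : ℝ) + 1)⌉₊ := Nat.ceil_pos.mpr (by positivity)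
  rw [inflatedQuantile, le_sInf_iff]
  constructor
  · intro h
    by_contra hc
    push_neg at hc
    have hne : (Finset.univ.filter (fun i => v i < w)).Nonempty :=
      Finset.card_pos.mp (lt_of_lt_of_le hk1 hc)
    set m := (Finset.univ.filter (fun i => v i < w)).sup' hne v with hm
    have hmw : m < w := by
      rw [hm]
      exact (Finset.sup'_lt_iff hne).mpr (fun i hi => (Finset.mem_filter.mp hi).2)
    have hsub : (Finset.univ.filter (fun i => v i < w))
        ⊆ (Finset.univ.filter (fun i => (v i : EReal) ≤ (m : EReal))) := by
      intro i hi
      refine Finset.mem_filter.mpr ⟨Finset.mem_univ i, ?_⟩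
      exact EReal.coe_le_coe_iff.mpr (Finset.le_sup' v hi)
    have htmem : ((m : EReal)) ∈ {t : EReal |
        β ≤ ((({i : Fin n | (v i : EReal) ≤ t}).ncard : ℝ) + (if t = ⊤ then 1 else 0))
            / ((n : ℝ) + 1)} := by
      rw [Set.mem_setOf_eq, mem_quantile_set_iff]
      have : (m : EReal) ≠ ⊤ := EReal.coe_ne_top m
      simp only [this, if_false, add_zero]
      exact le_trans hc (Finset.card_le_card hsub)
    have := h _ htmem
    exact absurd (EReal.coe_le_coe_iff.mp this) (not_le.mpr hmw)
  · intro hc t ht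
    rw [Set.mem_setOf_eq, mem_quantile_set_iff] at ht
    by_cases htop : t = ⊤
    · exact htop ▸ le_top
    · simp only [htop, if_false, add_zero] at ht
      by_contra hlt
      push_neg at hlt
      have hsub : (Finset.univ.filter (fun i => (v i : EReal) ≤ t))
          ⊆ (Finset.univ.filter (fun i => v i < w)) := by
        intro i hi
        refine Finset.mem_filter.mpr ⟨Finset.mem_univ i, ?_⟩
        have := lt_of_le_of_lt (Finset.mem_filter.mp hi).2 hlt
        exact_mod_cast this
      have := le_trans ht (Finset.card_le_card hsub)
      omega

lemma count_low_rank {m : ℕ} (x : Fin m → ℝ) (k : ℕ) (hk : k ≤ m) :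
    k ≤ (Finset.univ.filter
      (fun j => (Finset.univ.filter (fun i => x i < x j)).card < k)).card := by
  set T := Finset.univ.filter
      (fun j => (Finset.univ.filter (fun i => x i < x j)).card < k) with hT
  by_cases hTu : Tᶜ = ∅
  · have : T = Finset.univ := by
      rwa [Finset.compl_eq_empty_iff] at hTu
    rw [this, Finset.card_univ, Fintype.card_fin]
    exact hk
  · obtain ⟨j0, hj0, hmin⟩ := Finset.exists_min_image Tᶜ x (Finset.nonempty_of_ne_empty hTu)
    have hj0T : ¬ ((Finset.univ.filter (fun i => x i < x j0)).card < k) := by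
      have := Finset.mem_compl.mp hj0
      rw [hT] at this
      simpa using this
    push_neg at hj0T
    refine le_trans hj0T (Finset.card_le_card ?_)
    intro i hi
    have hix : x i < x j0 := (Finset.mem_filter.mp hi).2
    by_contra hiT
    have : i ∈ Tᶜ := Finset.mem_compl.mpr hiT
    exact absurd hix (not_lt.mpr (hmin i this))

lemma measurableSet_lowRank {m : ℕ} (j0 : Fin m) (k : ℕ) :
    MeasurableSet {x : Fin m → ℝ |
      (Finset.univ.filter (fun i => x i < x j0)).card < k} := by
  have hf : Measurable (fun x : Fin m → ℝ =>
      ∑ i : Fin m, if x i < x j0 then (1:ℕ) else 0) := by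
    apply Finset.measurable_sum
    intro i _
    exact Measurable.ite
      (measurableSet_lt (measurable_pi_apply i) (measurable_pi_apply j0))
      measurable_const measurable_const
  have heq : {x : Fin m → ℝ | (Finset.univ.filter (fun i => x i < x j0)).card < k}
      = (fun x : Fin m → ℝ => ∑ i : Fin m, if x i < x j0 then (1:ℕ) else 0) ⁻¹'
        (Set.Iio k) := by
    ext x
    rw [Set.mem_setOf_eq, Set.mem_preimage, Set.mem_Iio, Finset.card_filter]
  rw [heq]
  exact hf (by trivial)

lemma card_filter_perm {m : ℕ} (σ : Equiv.Perm (Fin m)) (x : Fin m → ℝ) (c : ℝ) :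
    (Finset.univ.filter (fun i => x (σ i) < c)).card
      = (Finset.univ.filter (fun i => x i < c)).card := by
  apply Finset.card_bij (fun i _ => σ i)
  · intro a ha
    simp only [Finset.mem_filter, Finset.mem_univ, true_and] at ha ⊢
    exact ha
  · intro a _ b _ h
    exact σ.injective h
  · intro b hb
    simp only [Finset.mem_filter, Finset.mem_univ, true_and] at hb ⊢
    exact ⟨σ.symm b, by simpa using hb, by simp⟩

lemma card_filter_castSucc {n : ℕ} (x : Fin (n+1) → ℝ) :
    (Finset.univ.filter (fun i : Fin n => x i.castSucc < x (Fin.last n))).card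
      = (Finset.univ.filter (fun i : Fin (n+1) => x i < x (Fin.last n))).card := by
  apply Finset.card_bij (fun i _ => i.castSucc)
  · intro a ha
    simp only [Finset.mem_filter, Finset.mem_univ, true_and] at ha ⊢
    exact ha
  · intro a _ b _ h
    exact Fin.castSucc_injective n h
  · intro b hb
    simp only [Finset.mem_filter, Finset.mem_univ, true_and] at hb ⊢
    have hbne : b ≠ Fin.last n := by
      rintro rfl
      exact lt_irrefl _ hb
    refine ⟨b.castPred hbne, ?_, ?_⟩
    · simpa [Fin.castSucc_castPred] using hb
    · simp [Fin.castSucc_castPred]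

/-- Inflated quantile lemma: for exchangeable real random variables `V₁,…,V_{n+1}` and
any `β ∈ (0,1)`, `P(V_{n+1} ≤ Quantile(β; V_{1:n} ∪ {∞})) ≥ β`. -/
theorem inflated_quantile_coverage {Ω : Type*} [MeasurableSpace Ω]
    (μ : Measure Ω) [IsProbabilityMeasure μ] (n : ℕ)
    (V : Fin (n + 1) → Ω → ℝ) (hmeas : ∀ i, Measurable (V i))
    (hexch : Exchangeable μ V) (β : ℝ) (hβ : β ∈ Set.Ioo (0:ℝ) 1) :
    ENNReal.ofReal β ≤
      μ {ω | (V (Fin.last n) ω : EReal) ≤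
        inflatedQuantile n β (fun i : Fin n => V i.castSucc ω)} := by
  obtain ⟨hβ0, hβ1⟩ := hβ
  set k := ⌈β * ((n : ℝ) + 1)⌉₊ with hkdef
  have hkle : k ≤ n + 1 := by
    rw [hkdef]
    apply Nat.ceil_le.mpr
    push_cast
    nlinarith
  -- the events A j
  set A : Fin (n+1) → Set Ω := fun j =>
    {ω | (Finset.univ.filter (fun i => V i ω < V j ω)).card < k} with hA
  -- the target set is A (last)
  have hset : {ω | (V (Fin.last n) ω : EReal) ≤
      inflatedQuantile n β (fun i : Fin n => V i.castSucc ω)} = A (Fin.last n) := by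
    ext ω
    rw [Set.mem_setOf_eq, le_inflatedQuantile_iff hβ0, hA]
    rw [Set.mem_setOf_eq, ← hkdef, card_filter_castSucc (fun i => V i ω)]
  rw [hset]
  -- measurability
  have hvec : Measurable (fun ω => fun i => V i ω) :=
    measurable_pi_lambda _ hmeas
  have hB := measurableSet_lowRank (Fin.last n) k
  have hAlast : A (Fin.last n) = (fun ω => fun i => V i ω) ⁻¹' {x : Fin (n+1) → ℝ |
      (Finset.univ.filter (fun i => x i < x (Fin.last n))).card < k} := rfl
  have hAmeas : ∀ j, MeasurableSet (A j) := by
    intro j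
    have : A j = (fun ω => fun i => V i ω) ⁻¹' {x : Fin (n+1) → ℝ |
        (Finset.univ.filter (fun i => x i < x j)).card < k} := rfl
    rw [this]
    exact hvec (measurableSet_lowRank j k)
  -- exchangeability: all A j have the same measure
  have hAeq : ∀ j, μ (A j) = μ (A (Fin.last n)) := by
    intro j
    set σ := Equiv.swap j (Fin.last n) with hσ
    have hvecσ : Measurable (fun ω => fun i => V (σ i) ω) :=
      measurable_pi_lambda _ (fun i => hmeas (σ i))
    have hAj : A j = (fun ω => fun i => V (σ i) ω) ⁻¹' {x : Fin (n+1) → ℝ |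
        (Finset.univ.filter (fun i => x i < x (Fin.last n))).card < k} := by
      ext ω
      rw [hA, Set.mem_setOf_eq, Set.mem_preimage, Set.mem_setOf_eq]
      have h1 : (fun i : Fin (n+1) => V (σ i) ω) (Fin.last n) = V j ω := by
        simp [hσ, Equiv.swap_apply_right]
      rw [h1, card_filter_perm σ (fun i => V i ω) (V j ω)]
    rw [hAj, hAlast, ← Measure.map_apply hvecσ hB, ← Measure.map_apply hvec hB,
      hexch σ]
  -- pointwise counting bound
  have hpoint : ∀ ω, (k : ℝ≥0∞) ≤
      ∑ j : Fin (n+1), (A j).indicator (fun _ => (1:ℝ≥0∞)) ω := by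
    intro ω
    have hsum : ∑ j : Fin (n+1), (A j).indicator (fun _ => (1:ℝ≥0∞)) ω
        = ((Finset.univ.filter (fun j => ω ∈ A j)).card : ℝ≥0∞) := by
      rw [Finset.card_filter]
      push_cast
      refine Finset.sum_congr rfl (fun j _ => ?_)
      by_cases h : ω ∈ A j <;> simp [Set.indicator_apply, h]
    rw [hsum]
    have := count_low_rank (fun i => V i ω) k hkle
    have hcount : (Finset.univ.filter
        (fun j => (Finset.univ.filter (fun i => V i ω < V j ω)).card < k)).card
        = (Finset.univ.filter (fun j => ω ∈ A j)).card := rfl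
    rw [hcount] at this
    exact_mod_cast this
  -- sum of the measures
  have hsummeas : (k : ℝ≥0∞) ≤ ∑ j : Fin (n+1), μ (A j) := by
    have h1 : ∑ j : Fin (n+1), μ (A j)
        = ∫⁻ ω, ∑ j : Fin (n+1), (A j).indicator (fun _ => (1:ℝ≥0∞)) ω ∂μ := by
      rw [lintegral_finset_sum]
      · refine Finset.sum_congr rfl (fun j _ => ?_)
        exact (lintegral_indicator_one (hAmeas j)).symm
      · exact fun j _ => (measurable_const).indicator (hAmeas j)
    rw [h1]
    calc (k : ℝ≥0∞) = ∫⁻ _, (k : ℝ≥0∞) ∂μ := by simp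
      _ ≤ _ := lintegral_mono hpoint
  -- conclude
  have hconst : ∑ j : Fin (n+1), μ (A j) = ((n:ℝ≥0∞) + 1) * μ (A (Fin.last n)) := by
    rw [Finset.sum_congr rfl (fun j _ => hAeq j), Finset.sum_const,
      Finset.card_univ, Fintype.card_fin, nsmul_eq_mul]
    push_cast
    ring
  rw [hconst] at hsummeas
  have hdiv : (k : ℝ≥0∞) / ((n:ℝ≥0∞) + 1) ≤ μ (A (Fin.last n)) := by
    rw [ENNReal.div_le_iff (by simp) (by simp)]
    rwa [mul_comm]
  refine le_trans ?_ hdiv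
  have hβk : β ≤ (k : ℝ) / ((n:ℝ) + 1) := by
    rw [le_div_iff₀ (by positivity)]
    exact Nat.le_ceil _
  calc ENNReal.ofReal β ≤ ENNReal.ofReal ((k:ℝ) / ((n:ℝ)+1)) :=
        ENNReal.ofReal_le_ofReal hβk
    _ = (k : ℝ≥0∞) / ((n:ℝ≥0∞) + 1) := by
        rw [ENNReal.ofReal_div_of_pos (by positivity)]
        congr 1
        · exact ENNReal.ofReal_natCast k
        · rw [ENNReal.ofReal_add (by positivity) (by norm_num)]
          simp [ENNReal.ofReal_natCast]
end

section
/- Let V_1, ..., V_{n+1} be exchangeable real-valued random variables. Then the event {V_{n+1} > Quantile(β; V_{1:n} ∪ {∞})} occurs if and only if {V_{n+1} > Quantile(β; V_{1:(n+1)})}, where quantiles are of the empirical distributions of the indicated multisets. -/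
open MeasureTheory Set
open scoped ENNReal Classical

/-- β-quantile of the empirical distribution of `n` real points (each with mass `1/n`). -/
noncomputable def empiricalQuantile (n : ℕ) (β : ℝ) (v : Fin n → ℝ) : EReal :=
  sInf {t : EReal | β ≤ (({i : Fin n | (v i : EReal) ≤ t}).ncard : ℝ) / (n : ℝ)}

/-- For exchangeable `V₁,…,V_{n+1}`, the event `{V_{n+1} > Quantile(β; V_{1:n} ∪ {∞})}`
occurs iff `{V_{n+1} > Quantile(β; V_{1:(n+1)})}` does. -/
theorem inflated_quantile_event_iff {Ω : Type*} [MeasurableSpace Ω]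
    (μ : Measure Ω) [IsProbabilityMeasure μ] (n : ℕ)
    (V : Fin (n + 1) → Ω → ℝ) (hmeas : ∀ i, Measurable (V i))
    (hexch : Exchangeable μ V) (β : ℝ) (hβ : β ∈ Set.Ioo (0:ℝ) 1) (ω : Ω) :
    inflatedQuantile n β (fun i : Fin n => V i.castSucc ω) < (V (Fin.last n) ω : EReal) ↔
      empiricalQuantile (n + 1) β (fun i => V i ω) < (V (Fin.last n) ω : EReal) := by
  set x : EReal := (V (Fin.last n) ω : EReal) with hx
  -- For t < x, the counting sets agree (neither counts the last coordinate).
  have hcount : ∀ t : EReal, t < x →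
      ({i : Fin (n + 1) | (V i ω : EReal) ≤ t}).ncard
        = ({i : Fin n | (V i.castSucc ω : EReal) ≤ t}).ncard := by
    intro t ht
    have hset : {i : Fin (n + 1) | (V i ω : EReal) ≤ t}
        = Fin.castSucc '' {i : Fin n | (V i.castSucc ω : EReal) ≤ t} := by
      ext i
      simp only [mem_setOf_eq, mem_image]
      constructor
      · intro hi
        rcases Fin.eq_castSucc_or_eq_last i with ⟨j, rfl⟩ | rfl
        · exact ⟨j, hi, rfl⟩
        · exact absurd hi (not_le.mpr ht)
      · rintro ⟨j, hj, rfl⟩; exact hj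
    rw [hset, Set.ncard_image_of_injective _ (Fin.castSucc_injective n)]
  have hne : ∀ t : EReal, t < x → t ≠ ⊤ := fun t ht =>
    (ht.trans (EReal.coe_lt_top _)).ne
  -- Membership equivalence for t < x.
  have hmem : ∀ t : EReal, t < x →
      (β ≤ ((({i : Fin n | ((V i.castSucc ω : ℝ) : EReal) ≤ t}).ncard : ℝ)
          + (if t = ⊤ then 1 else 0)) / ((n : ℝ) + 1)
        ↔ β ≤ (({i : Fin (n + 1) | ((V i ω : ℝ) : EReal) ≤ t}).ncard : ℝ) / ((n + 1 : ℕ) : ℝ)) := by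
    intro t ht
    rw [hcount t ht, if_neg (hne t ht)]
    push_cast
    ring_nf
  constructor
  · intro h
    rw [inflatedQuantile] at h
    rw [empiricalQuantile]
    rw [sInf_lt_iff] at h ⊢
    obtain ⟨t, ht, htx⟩ := h
    exact ⟨t, (hmem t htx).mp ht, htx⟩
  · intro h
    rw [empiricalQuantile] at h
    rw [inflatedQuantile]
    rw [sInf_lt_iff] at h ⊢
    obtain ⟨t, ht, htx⟩ := h
    exact ⟨t, (hmem t htx).mpr ht, htx⟩
end

section
/- Meta calibration: let (Q̂_i, F_i), i = 1,...,n+1, be exchangeable pairs where Q̂_i ∈ ℝ and F_i is a (random) cumulative distribution function, and let V̂_{n+1} be a random variable which, conditionally on (Q̂_{n+1}, F_{n+1}), has CDF F_{n+1}. Define Λ(β) := inf{ λ : (1/(n+1)) Σ_{i=1..n} F_i(Q̂_i + λ) ≥ β }. Then P(V̂_{n+1} ≤ Q̂_{n+1} + Λ(β)) ≥ β. -/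
open MeasureTheory Set
open scoped ENNReal Classical

noncomputable def Fbar (g : ℝ → ℝ) (x : EReal) : ℝ≥0∞ :=
  ⨅ q : ℚ, if x < ((q : ℝ) : EReal) then ENNReal.ofReal (g q) else 1

lemma Fbar_le_one {g : ℝ → ℝ} (hg1 : ∀ t, g t ≤ 1) (x : EReal) : Fbar g x ≤ 1 := by
  refine iInf_le_of_le 0 ?_
  split_ifs with h
  · exact le_trans (ENNReal.ofReal_le_ofReal (hg1 _)) (by simp)
  · exact le_rfl

lemma Fbar_le_of_lt {g : ℝ → ℝ} {x : EReal} {q : ℚ} (h : x < ((q : ℝ) : EReal)) :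
    Fbar g x ≤ ENNReal.ofReal (g q) := by
  refine iInf_le_of_le q ?_
  rw [if_pos h]

lemma ofReal_le_Fbar {g : ℝ → ℝ} (hg : Monotone g) (hg1 : ∀ t, g t ≤ 1)
    {r : ℝ} {x : EReal} (h : ((r : ℝ) : EReal) ≤ x) :
    ENNReal.ofReal (g r) ≤ Fbar g x := by
  refine le_iInf fun q => ?_
  split_ifs with hq
  · refine ENNReal.ofReal_le_ofReal (hg ?_)
    have : ((r : ℝ) : EReal) < ((q : ℝ) : EReal) := lt_of_le_of_lt h hq
    exact_mod_cast this.le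
  · exact le_trans (ENNReal.ofReal_le_ofReal (hg1 _)) (by simp)

lemma Fbar_mono {g : ℝ → ℝ} (hg1 : ∀ t, g t ≤ 1) : Monotone (Fbar g) := by
  intro x y hxy
  refine le_iInf fun q => ?_
  split_ifs with hq
  · exact iInf_le_of_le q (by rw [if_pos (lt_of_le_of_lt hxy hq)])
  · refine iInf_le_of_le q ?_
    split_ifs with hq'
    · exact le_trans (ENNReal.ofReal_le_ofReal (hg1 _)) (by simp)
    · exact le_rfl

lemma ofReal_iInf_le_Fbar {g : ℝ → ℝ} (hg0 : ∀ t, 0 ≤ g t) (hg1 : ∀ t, g t ≤ 1) (x : EReal) :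
    ENNReal.ofReal (⨅ q : ℚ, g q) ≤ Fbar g x := by
  refine le_iInf fun q => ?_
  have hbdd : BddBelow (Set.range fun q : ℚ => g q) :=
    ⟨0, by rintro y ⟨q, rfl⟩; exact hg0 _⟩
  split_ifs with hq
  · exact ENNReal.ofReal_le_ofReal (ciInf_le hbdd q)
  · exact le_trans (ENNReal.ofReal_le_ofReal (le_trans (ciInf_le hbdd 0) (hg1 _))) (by simp)

lemma Fbar_top (g : ℝ → ℝ) : Fbar g ⊤ = 1 := by
  simp [Fbar]

lemma Fbar_coe {g : ℝ → ℝ} (hg : Monotone g) (hg0 : ∀ t, 0 ≤ g t) (hg1 : ∀ t, g t ≤ 1)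
    {r : ℝ} (hrc : ContinuousWithinAt g (Set.Ici r) r) :
    Fbar g ((r : ℝ) : EReal) = ENNReal.ofReal (g r) := by
  refine le_antisymm ?_ (ofReal_le_Fbar hg hg1 le_rfl)
  refine ENNReal.le_of_forall_pos_le_add fun ε hε _ => ?_
  have hε' : (0:ℝ) < ε := by exact_mod_cast hε
  have h1 : ∀ᶠ t in nhdsWithin r (Set.Ici r), g t < g r + ε := by
    have := hrc (Iio_mem_nhds (show g r < g r + ε by linarith) : Set.Iio (g r + ε) ∈ nhds (g r))
    filter_upwards [this] with t ht using ht
  have h2 : ∃ t, r < t ∧ g t < g r + ε := by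
    have h3 : ∀ᶠ t in nhdsWithin r (Set.Ioi r), g t < g r + ε :=
      h1.filter_mono (nhdsWithin_mono r Ioi_subset_Ici_self)
    rcases (h3.and self_mem_nhdsWithin).exists with ⟨t, ht1, ht2⟩
    exact ⟨t, ht2, ht1⟩
  rcases h2 with ⟨t, hrt, hgt⟩
  rcases exists_rat_btwn hrt with ⟨q, hq1, hq2⟩
  have : Fbar g ((r : ℝ) : EReal) ≤ ENNReal.ofReal (g q) :=
    Fbar_le_of_lt (by exact_mod_cast hq1)
  refine this.trans ?_
  have : g (q : ℝ) ≤ g r + ε := le_trans (hg (le_of_lt hq2)) (le_of_lt hgt)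
  calc ENNReal.ofReal (g q) ≤ ENNReal.ofReal (g r + ε) := ENNReal.ofReal_le_ofReal this
    _ ≤ ENNReal.ofReal (g r) + ENNReal.ofReal ε := ENNReal.ofReal_add_le
    _ = ENNReal.ofReal (g r) + ε := by rw [ENNReal.ofReal_coe_nnreal]

/-- The meta-calibration correction `Λ(β)` built from the `n` calibration pairs
`(Q̂ᵢ, Fᵢ)` (valued in `EReal` so that it is `⊤` when no finite correction suffices). -/
noncomputable def metaCorrection (n : ℕ) (β : ℝ) (Q : Fin n → ℝ) (F : Fin n → ℝ → ℝ) : EReal :=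
  sInf {l : EReal | ∃ lr : ℝ, l = (lr : EReal) ∧
    β ≤ (∑ i : Fin n, F i (Q i + lr)) / ((n : ℝ) + 1)}

lemma iInf_rat_gt_le (r : ℝ) :
    (⨅ q : ℚ, if r < (q:ℝ) then ((q:ℝ):EReal) else ⊤) ≤ (r : EReal) := by
  rw [← EReal.le_of_forall_lt_iff_le]
  intro z hz
  have hz' : r < z := by exact_mod_cast hz
  rcases exists_rat_btwn hz' with ⟨q, hq1, hq2⟩
  calc (⨅ q : ℚ, if r < (q:ℝ) then ((q:ℝ):EReal) else ⊤) ≤ ((q:ℝ):EReal) :=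
        iInf_le_of_le q (by rw [if_pos hq1])
    _ ≤ ((z:ℝ):EReal) := by exact_mod_cast hq2.le

lemma metaCorrection_eq (n : ℕ) (β : ℝ) (x : Fin n → ℝ) (g : Fin n → ℝ → ℝ)
    (hmono : ∀ i, Monotone (g i)) :
    metaCorrection n β x g =
      ⨅ q : ℚ, if β ≤ (∑ i, g i (x i + (q:ℝ))) / ((n:ℝ)+1) then ((q:ℝ):EReal) else ⊤ := by
  apply le_antisymm
  · refine le_iInf fun q => ?_
    split_ifs with h
    · exact sInf_le ⟨q, rfl, h⟩
    · exact le_top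
  · refine le_sInf ?_
    rintro l ⟨lr, rfl, hlr⟩
    refine le_trans ?_ (iInf_rat_gt_le lr)
    refine le_iInf fun q => ?_
    split_ifs with h1
    · refine iInf_le_of_le q ?_
      have hcond : β ≤ (∑ i, g i (x i + (q:ℝ))) / ((n:ℝ)+1) := by
        refine le_trans hlr ?_
        have hn : (0:ℝ) < (n:ℝ) + 1 := by positivity
        have hsum : (∑ i, g i (x i + lr)) ≤ ∑ i, g i (x i + (q:ℝ)) :=
          Finset.sum_le_sum fun i _ => hmono i (by linarith [(by exact_mod_cast h1 : lr < (q:ℝ))])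
        exact (div_le_div_iff_of_pos_right hn).mpr hsum
      rw [if_pos hcond]
    · exact le_top

noncomputable def corrM (n : ℕ) (β : ℝ) (p : Fin (n+1) → ℝ × (ℝ → ℝ)) : EReal :=
  ⨅ q : ℚ, if ENNReal.ofReal (((n:ℝ)+1) * β) ≤
      ∑ i : Fin n, Fbar (p i.castSucc).2 ((((p i.castSucc).1 + (q:ℝ) : ℝ)) : EReal)
    then ((q:ℝ):EReal) else ⊤

lemma corrM_eq (n : ℕ) (β : ℝ) (hβ0 : 0 < β) (p : Fin (n+1) → ℝ × (ℝ → ℝ))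
    (hmono : ∀ i, Monotone (p i).2) (h0 : ∀ i t, 0 ≤ (p i).2 t) (h1 : ∀ i t, (p i).2 t ≤ 1)
    (hrc : ∀ i r, ContinuousWithinAt (p i).2 (Set.Ici r) r) :
    corrM n β p = metaCorrection n β (fun i => (p i.castSucc).1) (fun i => (p i.castSucc).2) := by
  rw [metaCorrection_eq _ _ _ _ (fun i => hmono i.castSucc)]
  unfold corrM
  congr 1
  funext q
  congr 1
  have hF : ∀ i : Fin n, Fbar (p i.castSucc).2 ((((p i.castSucc).1 + (q:ℝ) : ℝ)) : EReal)
      = ENNReal.ofReal ((p i.castSucc).2 ((p i.castSucc).1 + (q:ℝ))) := fun i =>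
    Fbar_coe (hmono _) (h0 _) (h1 _) (hrc _ _)
  rw [Finset.sum_congr rfl fun i _ => hF i]
  rw [← ENNReal.ofReal_sum_of_nonneg (fun i _ => h0 _ _)]
  have hn : (0:ℝ) < (n:ℝ) + 1 := by positivity
  have hsum0 : (0:ℝ) ≤ ∑ i : Fin n, (p i.castSucc).2 ((p i.castSucc).1 + (q:ℝ)) :=
    Finset.sum_nonneg fun i _ => h0 _ _
  rw [eq_iff_iff, ENNReal.ofReal_le_ofReal_iff hsum0]
  rw [le_div_iff₀ hn, mul_comm]

lemma corrM_measurable (n : ℕ) (β : ℝ) : Measurable (corrM n β) := by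
  refine Measurable.iInf fun q => ?_
  refine Measurable.ite ?_ measurable_const measurable_const
  refine measurableSet_le measurable_const ?_
  refine Finset.measurable_sum _ fun i _ => ?_
  unfold Fbar
  refine Measurable.iInf fun q' => ?_
  refine Measurable.ite ?_ ?_ measurable_const
  · have : Measurable fun p : Fin (n+1) → ℝ × (ℝ → ℝ) => (p i.castSucc).1 + (q:ℝ) :=
      (measurable_fst.comp (measurable_pi_apply _)).add_const _
    have h2 : MeasurableSet {p : Fin (n+1) → ℝ × (ℝ → ℝ) | (p i.castSucc).1 + (q:ℝ) < (q':ℝ)} :=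
      measurableSet_lt this measurable_const
    convert h2 using 1
    ext p
    simp only [Set.mem_setOf_eq]
    exact EReal.coe_lt_coe_iff
  · exact ((measurable_pi_apply (q':ℝ)).comp
      (measurable_snd.comp (measurable_pi_apply _))).ennreal_ofReal

lemma pointwise_key (n : ℕ) (β : ℝ) (hβ0 : 0 < β) (hβ1 : β ≤ 1)
    (x : Fin (n+1) → ℝ) (g : Fin (n+1) → ℝ → ℝ)
    (hmono : ∀ i, Monotone (g i)) (h0 : ∀ i t, 0 ≤ g i t) (h1 : ∀ i t, g i t ≤ 1)
    (hrc : ∀ i r, ContinuousWithinAt (g i) (Set.Ici r) r)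
    (L : Fin (n+1) → EReal)
    (hL : ∀ j, L j = metaCorrection n β (fun i => x (Equiv.swap j (Fin.last n) i.castSucc))
          (fun i => g (Equiv.swap j (Fin.last n) i.castSucc))) :
    ENNReal.ofReal (((n:ℝ)+1) * β) ≤
      ∑ j : Fin (n+1), Fbar (g j) ((x j : EReal) + L j) := by
  classical
  set R : Set ℝ := {lr : ℝ | ((n:ℝ)+1) * β ≤ ∑ i : Fin (n+1), g i (x i + lr)} with hR
  have hn : (0:ℝ) < (n:ℝ) + 1 := by positivity
  have hRup : ∀ {a b : ℝ}, a ∈ R → a ≤ b → b ∈ R := by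
    intro a b ha hab
    exact le_trans ha (Finset.sum_le_sum fun i _ => hmono i (by linarith))
  have hcond : ∀ (j : Fin (n+1)) (lr : ℝ),
      β ≤ (∑ i : Fin n, g (Equiv.swap j (Fin.last n) i.castSucc)
        (x (Equiv.swap j (Fin.last n) i.castSucc) + lr)) / ((n:ℝ)+1) → lr ∈ R := by
    intro j lr hlr
    set σ := Equiv.swap j (Fin.last n)
    set h : Fin (n+1) → ℝ := fun i => g i (x i + lr) with hh
    have e1 : ∑ i : Fin (n+1), h (σ i) = (∑ i : Fin n, h (σ i.castSucc)) + h (σ (Fin.last n)) :=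
      Fin.sum_univ_castSucc (fun i => h (σ i))
    have e2 : ∑ i : Fin (n+1), h (σ i) = ∑ i : Fin (n+1), h i := Equiv.sum_comp σ h
    have e3 : σ (Fin.last n) = j := Equiv.swap_apply_right _ _
    have hls : ((n:ℝ)+1) * β ≤ ∑ i : Fin n, h (σ i.castSucc) := by
      rw [mul_comm]; exact (le_div_iff₀ hn).mp hlr
    have : ∑ i : Fin n, h (σ i.castSucc) ≤ ∑ i : Fin (n+1), h i := by
      rw [← e2, e1, e3]
      have := h0 j (x j + lr)
      rw [hh]; simp only []
      nlinarith [h0 j (x j + lr)]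
    exact le_trans hls this
  have hlow : ∀ (j : Fin (n+1)) (b : ℝ), (∀ r ∈ R, b ≤ r) → ((b:ℝ):EReal) ≤ L j := by
    intro j b hb
    rw [hL j]
    refine le_sInf ?_
    rintro l ⟨lr, rfl, hlr⟩
    exact_mod_cast hb lr (hcond j lr hlr)
  by_cases hRne : R.Nonempty
  · by_cases hbdd : BddBelow R
    · -- finite infimum case
      have hmem' : ∀ t, sInf R < t → t ∈ R := by
        intro t ht
        rcases (csInf_lt_iff hbdd hRne).mp ht with ⟨r, hrR, hrt⟩
        exact hRup hrR hrt.le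
      have hstar : ((n:ℝ)+1) * β ≤ ∑ i : Fin (n+1), g i (x i + sInf R) := by
        have hct : ContinuousWithinAt (fun t => ∑ i : Fin (n+1), g i (x i + t))
            (Set.Ici (sInf R)) (sInf R) := by
          refine tendsto_finset_sum _ fun i _ => ?_
          have hin : ContinuousWithinAt (fun t : ℝ => x i + t) (Set.Ici (sInf R)) (sInf R) :=
            (continuous_const.add continuous_id).continuousWithinAt
          refine ContinuousWithinAt.comp (hrc i (x i + sInf R)) hin ?_
          intro t ht
          simpa using add_le_add_left (α := ℝ) ht (x i)
        have hct' : Filter.Tendsto (fun t => ∑ i : Fin (n+1), g i (x i + t))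
            (nhdsWithin (sInf R) (Set.Ioi (sInf R)))
            (nhds (∑ i : Fin (n+1), g i (x i + sInf R))) :=
          hct.mono_left (nhdsWithin_mono _ Set.Ioi_subset_Ici_self)
        refine ge_of_tendsto hct' ?_
        refine Filter.eventually_of_mem self_mem_nhdsWithin fun t ht => ?_
        exact hmem' t ht
      have hterm : ∀ j : Fin (n+1),
          ENNReal.ofReal (g j (x j + sInf R)) ≤ Fbar (g j) ((x j : EReal) + L j) := by
        intro j
        refine ofReal_le_Fbar (hmono j) (h1 j) ?_
        have : ((x j + sInf R : ℝ) : EReal) = (x j : EReal) + ((sInf R : ℝ) : EReal) := by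
          exact_mod_cast EReal.coe_add _ _
        rw [this]
        exact add_le_add_right (hlow j _ fun r hr => csInf_le hbdd hr) _
      calc ENNReal.ofReal (((n:ℝ)+1) * β)
          ≤ ENNReal.ofReal (∑ i : Fin (n+1), g i (x i + sInf R)) :=
            ENNReal.ofReal_le_ofReal hstar
        _ = ∑ i : Fin (n+1), ENNReal.ofReal (g i (x i + sInf R)) :=
            ENNReal.ofReal_sum_of_nonneg (fun i _ => h0 _ _)
        _ ≤ ∑ j : Fin (n+1), Fbar (g j) ((x j : EReal) + L j) :=
            Finset.sum_le_sum fun j _ => hterm j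
    · -- R = ℝ case
      have hall : ∀ lr : ℝ, lr ∈ R := by
        intro lr
        rcases not_bddBelow_iff.mp hbdd lr with ⟨r, hrR, hrlt⟩
        exact hRup hrR hrlt.le
      set c : Fin (n+1) → ℝ := fun j => ⨅ q : ℚ, g j q with hc
      have hc0 : ∀ j, 0 ≤ c j := fun j => Real.iInf_nonneg fun q => h0 j q
      have hcsum : ((n:ℝ)+1) * β ≤ ∑ j, c j := by
        by_contra hlt
        push_neg at hlt
        set δ := (((n:ℝ)+1) * β - ∑ j, c j) / ((n:ℝ)+1) with hδ
        have hδpos : 0 < δ := div_pos (by linarith) hn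
        have hex : ∀ j : Fin (n+1), ∃ q : ℚ, g j q < c j + δ := by
          intro j
          exact exists_lt_of_ciInf_lt (show c j < c j + δ by linarith)
        choose qs hqs using hex
        set t : ℝ := Finset.univ.inf' (Finset.univ_nonempty) (fun j => (qs j : ℝ) - x j) with hT
        have hle : ∀ j : Fin (n+1), g j (x j + t) < c j + δ := by
          intro j
          refine lt_of_le_of_lt (hmono j ?_) (hqs j)
          have : t ≤ (qs j : ℝ) - x j := Finset.inf'_le _ (Finset.mem_univ j)
          linarith
        have hsum := hall t
        rw [hR] at hsum
        have hsum2 : ∑ i : Fin (n+1), g i (x i + t) < ∑ j, (c j + δ) :=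
          Finset.sum_lt_sum_of_nonempty Finset.univ_nonempty fun j _ => hle j
        rw [Finset.sum_add_distrib, Finset.sum_const, Finset.card_univ, Fintype.card_fin] at hsum2
        have : ((n+1 : ℕ) : ℝ) * δ = ((n:ℝ)+1) * δ := by push_cast; ring
        rw [nsmul_eq_mul, this, hδ] at hsum2
        have : ((n:ℝ)+1) * ((((n:ℝ)+1) * β - ∑ j, c j) / ((n:ℝ)+1)) =
            ((n:ℝ)+1) * β - ∑ j, c j := by field_simp
        rw [this] at hsum2
        simp only [Set.mem_setOf_eq] at hsum
        linarith
      calc ENNReal.ofReal (((n:ℝ)+1) * β)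
          ≤ ENNReal.ofReal (∑ j, c j) := ENNReal.ofReal_le_ofReal hcsum
        _ = ∑ j, ENNReal.ofReal (c j) := ENNReal.ofReal_sum_of_nonneg (fun i _ => hc0 _)
        _ ≤ ∑ j : Fin (n+1), Fbar (g j) ((x j : EReal) + L j) :=
            Finset.sum_le_sum fun j _ => ofReal_iInf_le_Fbar (h0 j) (h1 j) _
  · -- R = ∅ case
    have hLtop : ∀ j, L j = ⊤ := by
      intro j
      rw [hL j]
      have : {l : EReal | ∃ lr : ℝ, l = (lr : EReal) ∧
          β ≤ (∑ i : Fin n, g (Equiv.swap j (Fin.last n) i.castSucc)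
            (x (Equiv.swap j (Fin.last n) i.castSucc) + lr)) / ((n:ℝ)+1)} = ∅ := by
        ext l
        simp only [Set.mem_setOf_eq, Set.mem_empty_iff_false, iff_false]
        rintro ⟨lr, rfl, hlr⟩
        exact hRne ⟨lr, hcond j lr hlr⟩
      rw [metaCorrection, this, sInf_empty]
    have hterm : ∀ j : Fin (n+1), Fbar (g j) ((x j : EReal) + L j) = 1 := by
      intro j
      rw [hLtop j]
      have : (x j : EReal) + ⊤ = ⊤ := by
        rw [EReal.add_top_iff_ne_bot]
        exact EReal.coe_ne_bot _
      rw [this, Fbar_top]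
    rw [Finset.sum_congr rfl fun j _ => hterm j]
    rw [Finset.sum_const, Finset.card_univ, Fintype.card_fin]
    calc ENNReal.ofReal (((n:ℝ)+1) * β)
        ≤ ENNReal.ofReal ((n:ℝ)+1) :=
          ENNReal.ofReal_le_ofReal (by nlinarith)
      _ = ((n+1 : ℕ) : ℝ≥0∞) := by
          rw [show ((n:ℝ)+1) = ((n+1:ℕ):ℝ) by push_cast; ring, ENNReal.ofReal_natCast]
      _ = (n+1 : ℕ) • (1 : ℝ≥0∞) := by simp

lemma ereal_add_lt_coe_iff (a b : ℝ) (c : EReal) :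
    (a : EReal) + c < (b : EReal) ↔ ∃ r : ℚ, c < ((r:ℝ):EReal) ∧ a < b - r := by
  induction c using EReal.rec with
  | bot =>
    simp only [EReal.add_bot]
    constructor
    · intro _
      rcases exists_rat_lt (b - a) with ⟨r, hr⟩
      exact ⟨r, bot_lt_iff_ne_bot.mpr (EReal.coe_ne_bot _), by linarith⟩
    · intro _
      exact bot_lt_iff_ne_bot.mpr (EReal.coe_ne_bot _)
  | coe c =>
    rw [show (a : EReal) + (c : EReal) = ((a + c : ℝ) : EReal) from (EReal.coe_add _ _).symm]
    rw [EReal.coe_lt_coe_iff]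
    constructor
    · intro h
      rcases exists_rat_btwn (show c < b - a by linarith) with ⟨r, hr1, hr2⟩
      exact ⟨r, by exact_mod_cast hr1, by linarith⟩
    · rintro ⟨r, hr1, hr2⟩
      have : c < (r : ℝ) := by exact_mod_cast hr1
      linarith
  | top =>
    constructor
    · intro h
      exfalso
      rw [EReal.add_top_iff_ne_bot.mpr (EReal.coe_ne_bot a)] at h
      exact (not_top_lt h)
    · rintro ⟨r, hr1, _⟩
      exact absurd hr1 (not_top_lt)

noncomputable def tauP (n : ℕ) (β : ℝ) (p : Fin (n+1) → ℝ × (ℝ → ℝ)) : EReal :=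
  (((p (Fin.last n)).1 : ℝ) : EReal) + corrM n β p

lemma measurableSet_tauP_lt (n : ℕ) (β : ℝ) (q : ℝ) :
    MeasurableSet {p : Fin (n+1) → ℝ × (ℝ → ℝ) | tauP n β p < ((q:ℝ):EReal)} := by
  have : {p : Fin (n+1) → ℝ × (ℝ → ℝ) | tauP n β p < ((q:ℝ):EReal)} =
      ⋃ r : ℚ, ({p : Fin (n+1) → ℝ × (ℝ → ℝ) | corrM n β p < ((r:ℝ):EReal)} ∩
        {p | (p (Fin.last n)).1 < q - r}) := by
    ext p
    simp only [Set.mem_setOf_eq, Set.mem_iUnion, Set.mem_inter_iff]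
    exact ereal_add_lt_coe_iff _ _ _
  rw [this]
  refine MeasurableSet.iUnion fun r => MeasurableSet.inter ?_ ?_
  · exact (corrM_measurable n β) measurableSet_Iio
  · exact measurableSet_lt (measurable_fst.comp (measurable_pi_apply _)) measurable_const

noncomputable def fP (n : ℕ) (β : ℝ) (p : Fin (n+1) → ℝ × (ℝ → ℝ)) : ℝ≥0∞ :=
  Fbar (p (Fin.last n)).2 (tauP n β p)

lemma fP_measurable (n : ℕ) (β : ℝ) : Measurable (fP n β) := by
  unfold fP Fbar
  refine Measurable.iInf fun q => ?_
  refine Measurable.ite ?_ ?_ measurable_const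
  · exact measurableSet_tauP_lt n β q
  · exact ((measurable_pi_apply ((q:ℝ))).comp
      (measurable_snd.comp (measurable_pi_apply _))).ennreal_ofReal
/-- Meta calibration: if the pairs `(Q̂ᵢ, Fᵢ)`, `i = 1,…,n+1`, are exchangeable (each `Fᵢ` a
random CDF), and `V̂` has conditional CDF `F_{n+1}` given the pairs, then
`P(V̂ ≤ Q̂_{n+1} + Λ(β)) ≥ β`, where `Λ(β)` is computed from the first `n` pairs. -/
theorem meta_calibration {Ω : Type*} [MeasurableSpace Ω]
    (μ : Measure Ω) [IsProbabilityMeasure μ] (n : ℕ)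
    (Q : Fin (n + 1) → Ω → ℝ) (F : Fin (n + 1) → Ω → ℝ → ℝ)
    (hQmeas : ∀ i, Measurable (Q i))
    (hFmeas : ∀ i, Measurable fun ω => F i ω)
    (hFmono : ∀ i ω, Monotone (F i ω))
    (hF01 : ∀ i ω t, F i ω t ∈ Set.Icc (0:ℝ) 1)
    (hFrc : ∀ i ω x, ContinuousWithinAt (F i ω) (Set.Ici x) x)
    -- exchangeability of the pairs (Q̂ᵢ, Fᵢ)
    (hexch : ∀ σ : Equiv.Perm (Fin (n + 1)),
      Measure.map (fun ω => fun i => (Q (σ i) ω, F (σ i) ω)) μ =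
        Measure.map (fun ω => fun i => (Q i ω, F i ω)) μ)
    (V : Ω → ℝ) (hVmeas : Measurable V)
    -- conditionally on the pairs, V̂ has CDF F_{n+1}
    (hVcdf : ∀ (t : ℝ) (A : Set Ω),
      MeasurableSet[MeasurableSpace.comap
        (fun ω => fun i : Fin (n + 1) => (Q i ω, F i ω)) inferInstance] A →
      μ ({ω | V ω ≤ t} ∩ A) = ENNReal.ofReal (∫ ω in A, F (Fin.last n) ω t ∂μ))
    (β : ℝ) (hβ : β ∈ Set.Ioo (0:ℝ) 1) :
    ENNReal.ofReal β ≤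
      μ {ω | (V ω : EReal) ≤ (Q (Fin.last n) ω : EReal) +
        metaCorrection n β (fun i => Q i.castSucc ω) (fun i => F i.castSucc ω)} := by
  classical
  obtain ⟨hβ0, hβ1⟩ := hβ
  set T : Ω → (Fin (n+1) → ℝ × (ℝ → ℝ)) := fun ω => fun i => (Q i ω, F i ω) with hTdef
  have hT : Measurable T := measurable_pi_lambda _ fun i => (hQmeas i).prodMk (hFmeas i)
  have hnice : ∀ (ω : Ω) (σ : Equiv.Perm (Fin (n+1))),
      corrM n β (fun i => T ω (σ i)) =
      metaCorrection n β (fun i => Q (σ i.castSucc) ω) (fun i => F (σ i.castSucc) ω) :=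
    fun ω σ => corrM_eq n β hβ0 _ (fun i => hFmono _ ω) (fun i t => (hF01 _ ω t).1)
      (fun i t => (hF01 _ ω t).2) (fun i r => hFrc _ ω r)
  have hagree : ∀ ω : Ω, corrM n β (T ω) =
      metaCorrection n β (fun i => Q i.castSucc ω) (fun i => F i.castSucc ω) := by
    intro ω
    simpa using hnice ω (Equiv.refl _)
  set τ : Ω → EReal := fun ω => tauP n β (T ω) with hτdef
  have hEset : {ω | (V ω : EReal) ≤ (Q (Fin.last n) ω : EReal) +
        metaCorrection n β (fun i => Q i.castSucc ω) (fun i => F i.castSucc ω)} =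
      {ω | (V ω : EReal) ≤ τ ω} := by
    ext ω
    simp only [Set.mem_setOf_eq, hτdef, tauP, hagree ω]
    exact Iff.rfl
  rw [hEset]
  set A := ∫⁻ ω, fP n β (T ω) ∂μ with hA
  -- Step 1: symmetrization
  have hswap : ∀ j : Fin (n+1),
      ∫⁻ ω, fP n β (fun i => T ω (Equiv.swap j (Fin.last n) i)) ∂μ = A := by
    intro j
    set σ : Equiv.Perm (Fin (n+1)) := Equiv.swap j (Fin.last n) with hσ
    have hL : Measurable fun p : Fin (n+1) → ℝ × (ℝ → ℝ) => (fun i => p (σ i)) :=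
      measurable_pi_lambda _ fun i => measurable_pi_apply _
    have h1 : ∫⁻ ω, fP n β (fun i => T ω (σ i)) ∂μ =
        ∫⁻ p, fP n β p ∂(Measure.map (fun ω => fun i => T ω (σ i)) μ) :=
      (lintegral_map (fP_measurable n β) (hL.comp hT)).symm
    have h2 : Measure.map (fun ω => fun i => T ω (σ i)) μ = Measure.map T μ := by
      have : (fun ω => fun i : Fin (n+1) => T ω (σ i)) =
          (fun ω => fun i => (Q (σ i) ω, F (σ i) ω)) := rfl
      rw [this, hexch σ]
    rw [h1, h2, lintegral_map (fP_measurable n β) hT]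
  -- Step 2: pointwise bound
  have hpt : ∀ ω : Ω, ENNReal.ofReal (((n:ℝ)+1) * β) ≤
      ∑ j : Fin (n+1), fP n β (fun i => T ω (Equiv.swap j (Fin.last n) i)) := by
    intro ω
    have key := pointwise_key n β hβ0 hβ1.le (fun i => Q i ω) (fun i => F i ω)
      (fun i => hFmono i ω) (fun i t => (hF01 i ω t).1) (fun i t => (hF01 i ω t).2)
      (fun i r => hFrc i ω r)
      (fun j => corrM n β (fun i => T ω (Equiv.swap j (Fin.last n) i)))
      (fun j => hnice ω (Equiv.swap j (Fin.last n)))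
    refine le_trans key (le_of_eq (Finset.sum_congr rfl fun j _ => ?_))
    have hlast : Equiv.swap j (Fin.last n) (Fin.last n) = j := Equiv.swap_apply_right _ _
    show Fbar (F j ω) _ = Fbar ((fun i => T ω (Equiv.swap j (Fin.last n) i)) (Fin.last n)).2 _
    simp only [fP, tauP]
    beta_reduce
    rw [hlast]
  -- Step 3: A ≥ β
  have hAge : ENNReal.ofReal β ≤ A := by
    have hmeas : ∀ j : Fin (n+1),
        Measurable fun ω => fP n β (fun i => T ω (Equiv.swap j (Fin.last n) i)) := by
      intro j
      exact (fP_measurable n β).comp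
        ((measurable_pi_lambda _ fun i => measurable_pi_apply _).comp hT)
    have h1 : ENNReal.ofReal (((n:ℝ)+1) * β) ≤ (n+1 : ℕ) * A := by
      calc ENNReal.ofReal (((n:ℝ)+1) * β)
          = ∫⁻ _, ENNReal.ofReal (((n:ℝ)+1) * β) ∂μ := by
            rw [lintegral_const, measure_univ, mul_one]
        _ ≤ ∫⁻ ω, ∑ j : Fin (n+1), fP n β (fun i => T ω (Equiv.swap j (Fin.last n) i)) ∂μ :=
            lintegral_mono hpt
        _ = ∑ j : Fin (n+1), ∫⁻ ω, fP n β (fun i => T ω (Equiv.swap j (Fin.last n) i)) ∂μ :=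
            lintegral_finset_sum _ fun j _ => hmeas j
        _ = ∑ _j : Fin (n+1), A := Finset.sum_congr rfl fun j _ => hswap j
        _ = (n+1 : ℕ) * A := by rw [Finset.sum_const, Finset.card_univ, Fintype.card_fin,
            nsmul_eq_mul]
    have h2 : ENNReal.ofReal (((n:ℝ)+1) * β) = (n+1 : ℕ) * ENNReal.ofReal β := by
      rw [ENNReal.ofReal_mul (by positivity)]
      congr 1
      rw [show ((n:ℝ)+1) = ((n+1:ℕ):ℝ) by push_cast; ring, ENNReal.ofReal_natCast]
    rw [h2] at h1
    exact (ENNReal.mul_le_mul_iff_right (by simp) (by simp)).mp h1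
  refine le_trans hAge ?_
  -- Step 4: event bound
  have hτlt : ∀ q : ℚ, MeasurableSet {ω | τ ω < ((q:ℝ):EReal)} := fun q =>
    hT (measurableSet_tauP_lt n β q)
  have hFint : ∀ (t : ℝ) (S : Set Ω), Integrable (fun ω => F (Fin.last n) ω t) (μ.restrict S) := by
    intro t S
    have hm : Measurable fun ω => F (Fin.last n) ω t := (measurable_pi_apply t).comp (hFmeas _)
    refine (integrable_const (1:ℝ)).mono' hm.aestronglyMeasurable ?_
    refine Filter.Eventually.of_forall fun ω => ?_
    rw [Real.norm_eq_abs, abs_le]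
    exact ⟨by linarith [(hF01 (Fin.last n) ω t).1], (hF01 (Fin.last n) ω t).2⟩
  have hstep : ∀ s : Finset ℚ,
      A ≤ μ {ω | ∀ q ∈ s, τ ω < ((q:ℝ):EReal) → (V ω : EReal) ≤ ((q:ℝ):EReal)} := by
    intro s
    set Bq : ℚ → Set (Fin (n+1) → ℝ × (ℝ → ℝ)) := fun q =>
      {p | tauP n β p < ((q:ℝ):EReal) ∧ ∀ q' ∈ s, tauP n β p < ((q':ℝ):EReal) → q ≤ q'} with hBq
    have hBqmeas : ∀ q, MeasurableSet (Bq q) := by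
      intro q
      have heq : Bq q = {p : Fin (n+1) → ℝ × (ℝ → ℝ) | tauP n β p < ((q:ℝ):EReal)} ∩
          ⋂ q' ∈ s, ({p : Fin (n+1) → ℝ × (ℝ → ℝ) | tauP n β p < ((q':ℝ):EReal)}ᶜ ∪
            {_p : Fin (n+1) → ℝ × (ℝ → ℝ) | q ≤ q'}) := by
        ext p
        simp only [hBq, Set.mem_inter_iff, Set.mem_iInter, Set.mem_setOf_eq, Set.mem_union,
          Set.mem_compl_iff]
        refine and_congr_right fun _ => forall_congr' fun q' => ?_
        constructor
        · intro h hq'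
          by_cases hlt : tauP n β p < ((q':ℝ):EReal)
          · exact Or.inr (h hq' hlt)
          · exact Or.inl hlt
        · intro h hq' hlt
          rcases h hq' with h1 | h2
          · exact absurd hlt h1
          · exact h2
      rw [heq]
      exact (measurableSet_tauP_lt n β q).inter
        (MeasurableSet.biInter (Set.to_countable _) fun q' _ =>
          ((measurableSet_tauP_lt n β q').compl.union (MeasurableSet.const _)))
    set Aq : ℚ → Set Ω := fun q => T ⁻¹' (Bq q) with hAq
    have hAqmeas : ∀ q, MeasurableSet (Aq q) := fun q => hT (hBqmeas q)
    set U : Set Ω := ⋃ q ∈ s, Aq q with hU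
    have hUmeas : MeasurableSet U :=
      MeasurableSet.biUnion (Set.to_countable _) fun q _ => hAqmeas q
    have hUc : ∀ ω, ω ∈ Uᶜ ↔ ∀ q ∈ s, ¬ τ ω < ((q:ℝ):EReal) := by
      intro ω
      simp only [hU, Set.mem_compl_iff, Set.mem_iUnion, not_exists, hAq, Set.mem_preimage, hBq,
        Set.mem_setOf_eq]
      constructor
      · intro h q hq hlt
        have hne : (s.filter (fun q' : ℚ => τ ω < ((q':ℝ):EReal))).Nonempty :=
          ⟨q, Finset.mem_filter.mpr ⟨hq, hlt⟩⟩
        set M := (s.filter (fun q' : ℚ => τ ω < ((q':ℝ):EReal))).min' hne with hM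
        have hM1 := Finset.min'_mem _ hne
        rw [Finset.mem_filter] at hM1
        refine h M hM1.1 ⟨hM1.2, fun q' hq' hlt' => ?_⟩
        exact Finset.min'_le _ _ (Finset.mem_filter.mpr ⟨hq', hlt'⟩)
      · intro h q hq hdata
        exact h q hq hdata.1
    have hdisj : (↑s : Set ℚ).PairwiseDisjoint Aq := by
      intro q1 h1 q2 h2 hne
      refine Set.disjoint_left.mpr fun ω hω1 hω2 => ?_
      simp only [hAq, Set.mem_preimage, hBq, Set.mem_setOf_eq] at hω1 hω2
      exact hne (le_antisymm (hω1.2 q2 h2 hω2.1) (hω2.2 q1 h1 hω1.1))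
    have hdisj2 : (↑s : Set ℚ).PairwiseDisjoint (fun q => {ω | V ω ≤ (q:ℝ)} ∩ Aq q) :=
      fun q1 h1 q2 h2 hne => ((hdisj h1 h2 hne).mono Set.inter_subset_right
        Set.inter_subset_right)
    have hincl : ((⋃ q ∈ s, ({ω | V ω ≤ (q:ℝ)} ∩ Aq q)) ∪ Uᶜ) ⊆
        {ω | ∀ q ∈ s, τ ω < ((q:ℝ):EReal) → (V ω : EReal) ≤ ((q:ℝ):EReal)} := by
      intro ω hω
      rcases hω with hω | hω
      · simp only [Set.mem_iUnion] at hω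
        rcases hω with ⟨q, hq, hVq, hAqω⟩
        intro q' hq' hlt
        simp only [hAq, Set.mem_preimage, hBq, Set.mem_setOf_eq] at hAqω
        have hqq' : (q:ℝ) ≤ (q':ℝ) := by exact_mod_cast hAqω.2 q' hq' hlt
        have h1 : (V ω : EReal) ≤ ((q:ℝ):EReal) := by exact_mod_cast hVq
        exact le_trans h1 (by exact_mod_cast hqq')
      · intro q hq hlt
        exact absurd hlt ((hUc ω).mp hω q hq)
    -- the lintegral splitting
    have hsplit : A = (∑ q ∈ s, ∫⁻ ω in Aq q, fP n β (T ω) ∂μ) +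
        ∫⁻ ω in Uᶜ, fP n β (T ω) ∂μ := by
      rw [hA, ← lintegral_add_compl (fun ω => fP n β (T ω)) hUmeas]
      congr 1
      rw [hU, lintegral_biUnion_finset hdisj (fun q _ => hAqmeas q)]
    have hbound1 : ∀ q ∈ s, ∫⁻ ω in Aq q, fP n β (T ω) ∂μ ≤ μ ({ω | V ω ≤ (q:ℝ)} ∩ Aq q) := by
      intro q _
      have hcomap : MeasurableSet[MeasurableSpace.comap T inferInstance] (Aq q) :=
        ⟨Bq q, hBqmeas q, rfl⟩
      have h1 : ∫⁻ ω in Aq q, fP n β (T ω) ∂μ ≤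
          ∫⁻ ω in Aq q, ENNReal.ofReal (F (Fin.last n) ω (q:ℝ)) ∂μ := by
        refine setLIntegral_mono ((measurable_pi_apply _).comp (hFmeas _)).ennreal_ofReal ?_
        intro ω hω
        simp only [hAq, Set.mem_preimage, hBq, Set.mem_setOf_eq] at hω
        exact Fbar_le_of_lt hω.1
      refine h1.trans (le_of_eq ?_)
      rw [← ofReal_integral_eq_lintegral_ofReal (hFint _ _)
        (Filter.Eventually.of_forall fun ω => (hF01 (Fin.last n) ω _).1)]
      exact (hVcdf (q:ℝ) (Aq q) hcomap).symm
    have hbound2 : ∫⁻ ω in Uᶜ, fP n β (T ω) ∂μ ≤ μ Uᶜ := by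
      rw [← setLIntegral_one]
      refine setLIntegral_mono measurable_const fun ω _ => ?_
      exact Fbar_le_one (fun t => (hF01 (Fin.last n) ω t).2) _
    calc A ≤ (∑ q ∈ s, μ ({ω | V ω ≤ (q:ℝ)} ∩ Aq q)) + μ Uᶜ := by
          rw [hsplit]
          exact add_le_add (Finset.sum_le_sum hbound1) hbound2
      _ = μ (⋃ q ∈ s, ({ω | V ω ≤ (q:ℝ)} ∩ Aq q)) + μ Uᶜ := by
          rw [measure_biUnion_finset hdisj2 fun q _ =>
            ((hVmeas measurableSet_Iic).inter (hAqmeas q))]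
      _ = μ ((⋃ q ∈ s, ({ω | V ω ≤ (q:ℝ)} ∩ Aq q)) ∪ Uᶜ) := by
          rw [measure_union ?_ hUmeas.compl]
          refine Set.disjoint_left.mpr fun ω hω1 hω2 => ?_
          simp only [Set.mem_iUnion] at hω1
          rcases hω1 with ⟨q, hq, _, hAqω⟩
          exact hω2 (Set.mem_biUnion hq hAqω)
      _ ≤ _ := measure_mono hincl
  -- assemble via countable family of rationals
  set e : ℕ → ℚ := fun m => (Denumerable.eqv ℚ).symm m with he
  have hesurj : ∀ q : ℚ, ∃ m, e m = q := fun q =>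
    ⟨Denumerable.eqv ℚ q, Equiv.symm_apply_apply _ _⟩
  set Es : ℕ → Set Ω := fun m => {ω | ∀ q ∈ (Finset.range (m+1)).image e,
    τ ω < ((q:ℝ):EReal) → (V ω : EReal) ≤ ((q:ℝ):EReal)} with hEs
  have hanti : Antitone Es := by
    intro m1 m2 h ω hω q hq hlt
    refine hω q ?_ hlt
    exact Finset.image_subset_image (Finset.range_subset_range.mpr (by omega)) hq
  have hiInter : ⋂ m, Es m = {ω | (V ω : EReal) ≤ τ ω} := by
    ext ω
    simp only [Set.mem_iInter, hEs, Set.mem_setOf_eq]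
    constructor
    · intro h
      by_contra hvt
      push_neg at hvt
      rcases EReal.lt_iff_exists_rat_btwn.mp hvt with ⟨r, hr1, hr2⟩
      rcases hesurj r with ⟨m, hm⟩
      have hmem : r ∈ (Finset.range (m+1)).image e :=
        Finset.mem_image.mpr ⟨m, Finset.mem_range.mpr (Nat.lt_succ_self m), hm⟩
      exact absurd (h m r hmem hr1) (not_le.mpr hr2)
    · intro h m q _ hlt
      exact le_trans h hlt.le
  have hEsmeas : ∀ m, MeasurableSet (Es m) := by
    intro m
    have heq : Es m = ⋂ q ∈ (Finset.range (m+1)).image e,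
        ({ω | τ ω < ((q:ℝ):EReal)}ᶜ ∪ {ω | V ω ≤ (q:ℝ)}) := by
      ext ω
      simp only [hEs, Set.mem_setOf_eq, Set.mem_iInter, Set.mem_union, Set.mem_compl_iff]
      refine forall_congr' fun q => forall_congr' fun _ => ?_
      constructor
      · intro h
        by_cases hlt : τ ω < ((q:ℝ):EReal)
        · exact Or.inr (by exact_mod_cast h hlt)
        · exact Or.inl hlt
      · intro h hlt
        rcases h with h1 | h2
        · exact absurd hlt h1
        · exact_mod_cast h2
    rw [heq]
    exact MeasurableSet.biInter (Set.to_countable _) fun q _ =>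
      ((hτlt q).compl.union (hVmeas measurableSet_Iic))
  calc A ≤ ⨅ m, μ (Es m) := le_iInf fun m => hstep _
    _ = μ (⋂ m, Es m) :=
        (Antitone.measure_iInter hanti (fun m => (hEsmeas m).nullMeasurableSet)
          ⟨0, measure_ne_top μ _⟩).symm
    _ = μ {ω | (V ω : EReal) ≤ τ ω} := by rw [hiInter]
end
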